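/- (Corollary 1) In the setup below, assume f is weakly homogeneous of degree d ∈ (0,1] and tolerance η ≥ 1 over [0,1], and assume Δ·k < 1. Take c ∈ (Δ·k, 1), ε = c/k and a = (ε·(ε−Δ))^{1/d}. Then, with ψ(c,δ) := e^{−c/(1−c)}·(1−δ), for every S ⊆ {1,…,n} with |S| ≤ k: (1/2)·ψ(c, Δ·k/c)·v(S) ≤ u(S) ≤ 2η·(1+c)/ψ(c, Δ·k/c) · v(S). -/

import Mathlib

open MeasureTheory ProbabilityTheory

def mask {n : ℕ} (S : Finset (Fin n)) (x : Fin n → ℝ) : Fin n → ℝ :=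
  fun i => if i ∈ S then x i else 0

namespace SketchAux

lemma mask_apply {n : ℕ} (S : Finset (Fin n)) (x : Fin n → ℝ) (i : Fin n) :
    mask S x i = if i ∈ S then x i else 0 := rfl

lemma mask_nonneg {n : ℕ} (S : Finset (Fin n)) {x : Fin n → ℝ} (hx : ∀ i, 0 ≤ x i) :
    0 ≤ mask S x := by
  intro i
  rw [Pi.zero_apply, mask_apply]
  split
  · exact hx i
  · exact le_rfl

lemma mask_mono {n : ℕ} (S : Finset (Fin n)) {x y : Fin n → ℝ} (h : ∀ i, x i ≤ y i) :
    mask S x ≤ mask S y := by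
  intro i
  rw [mask_apply, mask_apply]
  split
  · exact h i
  · exact le_rfl

lemma single_nonneg' {n : ℕ} (i : Fin n) {b : ℝ} (hb : 0 ≤ b) :
    (0 : Fin n → ℝ) ≤ Pi.single i b := by
  intro j
  rw [Pi.zero_apply, Pi.single_apply]
  split
  · exact hb
  · exact le_rfl

lemma single_le_mask {n : ℕ} {S : Finset (Fin n)} {i : Fin n} (hi : i ∈ S)
    {x : Fin n → ℝ} (hx : ∀ j, 0 ≤ x j) : Pi.single i (x i) ≤ mask S x := by
  intro j
  rw [Pi.single_apply, mask_apply]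
  by_cases hji : j = i
  · subst hji; rw [if_pos rfl, if_pos hi]
  · rw [if_neg hji]
    split
    · exact hx j
    · exact le_rfl

lemma mask_insert {n : ℕ} {i : Fin n} {s : Finset (Fin n)} (his : i ∉ s) (x : Fin n → ℝ) :
    mask (insert i s) x = Pi.single i (x i) + mask s x := by
  funext j
  by_cases hji : j = i
  · subst hji; simp [mask_apply, Pi.single_apply, his]
  · simp [mask_apply, Pi.single_apply, hji]

lemma f_mask_le_sum {n : ℕ} (f : (Fin n → ℝ) → ℝ)
    (hf0 : f 0 = 0)
    (hf_subadd : ∀ x y : Fin n → ℝ, 0 ≤ x → 0 ≤ y → f (x + y) ≤ f x + f y)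
    (x : Fin n → ℝ) (hx : ∀ i, 0 ≤ x i) :
    ∀ s : Finset (Fin n), f (mask s x) ≤ ∑ i ∈ s, f (Pi.single i (x i)) := by
  intro s
  induction s using Finset.induction_on with
  | empty =>
      have h : mask (∅ : Finset (Fin n)) x = 0 := by
        funext j; rw [mask_apply]; simp
      rw [h, hf0, Finset.sum_empty]
  | @insert i s his ih =>
      rw [mask_insert his, Finset.sum_insert his]
      calc f (Pi.single i (x i) + mask s x)
          ≤ f (Pi.single i (x i)) + f (mask s x) :=
            hf_subadd _ _ (single_nonneg' i (hx i)) (mask_nonneg s hx)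
        _ ≤ _ := by linarith

lemma sum_le_of_pairwise {ι : Type*} (S : Finset ι) (t : ι → ℝ) (M : ℝ) (hM : 0 ≤ M)
    (ht : ∀ i ∈ S, t i ≤ M)
    (hp : ∀ i ∈ S, ∀ j ∈ S, i ≠ j → t i = 0 ∨ t j = 0) :
    ∑ i ∈ S, t i ≤ M := by
  by_cases h : ∃ i ∈ S, t i ≠ 0
  · obtain ⟨i0, hi0, hti0⟩ := h
    rw [Finset.sum_eq_single_of_mem i0 hi0 (fun j hj hji => by
      rcases hp j hj i0 hi0 hji with h1 | h2
      · exact h1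
      · exact absurd h2 hti0)]
    exact ht i0 hi0
  · push_neg at h
    rw [Finset.sum_eq_zero h]
    exact hM

lemma exp_le_pow {ε c : ℝ} {k : ℕ} (hε0 : 0 < ε) (hε1 : ε < 1) (hc1 : c < 1)
    (hkε : (k : ℝ) * ε = c) (hεc : ε ≤ c) :
    Real.exp (-(c / (1 - c))) ≤ (1 - ε) ^ k := by
  have h1ε : 0 < 1 - ε := by linarith
  have hc0 : 0 < c := lt_of_lt_of_le hε0 hεc
  have h1 : Real.exp (-(ε / (1 - ε))) ≤ 1 - ε := by
    have h2 : 1 / (1 - ε) ≤ Real.exp (ε / (1 - ε)) := by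
      have := Real.add_one_le_exp (ε / (1 - ε))
      have heq : ε / (1 - ε) + 1 = 1 / (1 - ε) := by field_simp; ring
      linarith
    have h3 : 0 < Real.exp (ε / (1 - ε)) := Real.exp_pos _
    rw [Real.exp_neg, inv_le_comm₀ h3 h1ε]
    calc (1 - ε)⁻¹ = 1 / (1 - ε) := (one_div _).symm
      _ ≤ _ := h2
  calc Real.exp (-(c / (1 - c)))
      ≤ Real.exp (-(c / (1 - ε))) := by
        apply Real.exp_le_exp.mpr
        apply neg_le_neg
        apply div_le_div_of_nonneg_left hc0.le (by linarith) (by linarith)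
    _ = Real.exp (-(ε / (1 - ε))) ^ k := by
        rw [← Real.exp_nat_mul]
        congr 1
        rw [← hkε]
        field_simp
    _ ≤ (1 - ε) ^ k := by
        apply pow_le_pow_left₀ (Real.exp_pos _).le h1


lemma indep_tail {Ωs : Type*} [MeasurableSpace Ωs] (μ : Measure Ωs) [IsProbabilityMeasure μ]
    {n : ℕ} (X : Fin n → Ωs → ℝ) (hX_meas : ∀ i, Measurable (X i))
    (hX_indep : iIndepFun X μ)
    (τ : Fin n → ℝ) (i : Fin n) (s : Finset (Fin n)) (his : i ∉ s)
    (w : ℝ → ℝ) (hw : Measurable w) (hWint : Integrable (fun ω => w (X i ω)) μ) :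
    ∫ ω, w (X i ω) * ∏ j ∈ s, (if X j ω ≤ τ j then (1:ℝ) else 0) ∂μ
      = (∫ ω, w (X i ω) ∂μ) * ∏ j ∈ s, (μ {ω | X j ω ≤ τ j}).toReal := by
  classical
  set G : Ωs → ℝ := fun ω => ∏ j ∈ s, (if X j ω ≤ τ j then (1:ℝ) else 0) with hGdef
  have hGmeas : Measurable G :=
    Finset.measurable_prod _ fun j _ => Measurable.ite
      (measurableSet_le (hX_meas j) measurable_const) measurable_const measurable_const
  have hG0 : ∀ ω, 0 ≤ G ω := fun ω =>
    Finset.prod_nonneg fun j _ => by split <;> norm_num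
  have hG1 : ∀ ω, G ω ≤ 1 := fun ω =>
    Finset.prod_le_one (fun j _ => by split <;> norm_num) (fun j _ => by split <;> norm_num)
  have hGint : Integrable G μ := by
    refine (integrable_const (1:ℝ)).mono' hGmeas.aestronglyMeasurable (ae_of_all _ fun ω => ?_)
    rw [Real.norm_eq_abs, abs_of_nonneg (hG0 ω)]
    exact hG1 ω
  have hindep : IndepFun (fun ω => w (X i ω)) G μ := by
    have hd : Disjoint ({i} : Finset (Fin n)) s := Finset.disjoint_singleton_left.mpr his
    have h := hX_indep.indepFun_finset {i} s hd hX_meas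
    have hφ : Measurable (fun v : (({i} : Finset (Fin n)) : Type) → ℝ =>
        w (v ⟨i, Finset.mem_singleton_self i⟩)) := hw.comp (measurable_pi_apply _)
    have hψ : Measurable (fun v : ((s : Finset (Fin n)) : Type) → ℝ =>
        ∏ j ∈ s.attach, (if v j ≤ τ (j : Fin n) then (1:ℝ) else 0)) :=
      Finset.measurable_prod _ fun j _ => Measurable.ite
        (measurableSet_le (measurable_pi_apply _) measurable_const)
        measurable_const measurable_const
    have h2 := h.comp hφ hψ
    have he : ((fun v : ((s : Finset (Fin n)) : Type) → ℝ =>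
        ∏ j ∈ s.attach, (if v j ≤ τ (j : Fin n) then (1:ℝ) else 0)) ∘
          (fun ω (j : (s : Finset (Fin n))) => X j ω)) = G := by
      funext ω
      simp only [Function.comp_apply, hGdef]
      exact Finset.prod_attach s (fun j => if X j ω ≤ τ j then (1:ℝ) else 0)
    rw [he] at h2
    exact h2
  have hmul : ∫ ω, w (X i ω) * G ω ∂μ = (∫ ω, w (X i ω) ∂μ) * ∫ ω, G ω ∂μ :=
    hindep.integral_fun_mul_eq_mul_integral hWint.aestronglyMeasurable hGint.aestronglyMeasurable
  have hB : MeasurableSet (⋂ j ∈ s, {ω | X j ω ≤ τ j}) :=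
    Finset.measurableSet_biInter s fun j _ => measurableSet_le (hX_meas j) measurable_const
  have hGeq : G = (⋂ j ∈ s, {ω | X j ω ≤ τ j}).indicator (fun _ => (1:ℝ)) := by
    funext ω
    rw [hGdef]
    by_cases hmem : ω ∈ ⋂ j ∈ s, {ω' | X j ω' ≤ τ j}
    · rw [Set.indicator_of_mem hmem]
      dsimp only
      rw [Finset.prod_boole]
      refine if_pos fun j hj => ?_
      simpa using Set.mem_iInter₂.mp hmem j hj
    · rw [Set.indicator_of_notMem hmem]
      dsimp only
      rw [Finset.prod_boole]
      refine if_neg fun h => hmem (Set.mem_iInter₂.mpr fun j hj => ?_)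
      simpa using h j hj
  have hGI : ∫ ω, G ω ∂μ = ∏ j ∈ s, (μ {ω | X j ω ≤ τ j}).toReal := by
    have hμB : μ (⋂ j ∈ s, {ω | X j ω ≤ τ j}) = ∏ j ∈ s, μ {ω | X j ω ≤ τ j} :=
      hX_indep.meas_biInter (S := s) (s := fun j => {ω | X j ω ≤ τ j})
        (fun j _ => ⟨Set.Iic (τ j), measurableSet_Iic, rfl⟩)
    rw [hGeq, integral_indicator_const (1:ℝ) hB, smul_eq_mul, mul_one, measureReal_def, hμB,
      ENNReal.toReal_prod]
  rw [hmul, hGI]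

end SketchAux


set_option maxHeartbeats 2000000 in
open SketchAux in
/-- Corollary 1: under the setup of Theorem 1 with `Δ·k < 1`, `c ∈ (Δ·k, 1)`,
`ε = c/k` and `a = (ε(ε−Δ))^{1/d}`, setting `ψ(c,δ) = e^{−c/(1−c)}(1−δ)`, for every
`S` with `|S| ≤ k`:
`(1/2)·ψ(c, Δk/c)·v(S) ≤ u(S) ≤ 2η(1+c)/ψ(c, Δk/c)·v(S)`. -/
theorem sketch_constant_factor_approx
    {Ωs : Type*} [MeasurableSpace Ωs] (μ : Measure Ωs) [IsProbabilityMeasure μ]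
    {n : ℕ} (hn : 1 ≤ n)
    (X : Fin n → Ωs → ℝ)
    (hX_meas : ∀ i, Measurable (X i))
    (hX_nonneg : ∀ i ω, 0 ≤ X i ω)
    (hX_indep : iIndepFun X μ)
    (f : (Fin n → ℝ) → ℝ)
    (hf_meas : Measurable f)
    (hf_nonneg : ∀ x : Fin n → ℝ, 0 ≤ x → 0 ≤ f x)
    (hf_mono : ∀ x y : Fin n → ℝ, 0 ≤ x → x ≤ y → f x ≤ f y)
    (hf_subadd : ∀ x y : Fin n → ℝ, 0 ≤ x → 0 ≤ y → f (x + y) ≤ f x + f y)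
    (d η : ℝ) (hd : d ∈ Set.Ioc (0 : ℝ) 1) (hη : 1 ≤ η)
    (hf_hom : ∀ (x : Fin n → ℝ) (θ : ℝ), 0 ≤ x → θ ∈ Set.Icc (0 : ℝ) 1 →
      (1 / η) * θ * f x ≤ f (θ • x) ∧ f (θ • x) ≤ θ ^ d * f x)
    (k : ℕ) (hk : 1 ≤ k)
    (Δ : ℝ) (hΔ : 0 ≤ Δ) (hΔk : Δ * k < 1)
    (c : ℝ) (hc : c ∈ Set.Ioo (Δ * k) 1)
    (ε : ℝ) (hεdef : ε = c / k) (hε : ε ∈ Set.Ioo Δ 1)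
    (a : ℝ) (hadef : a = (ε * (ε - Δ)) ^ (1 / d))
    (τ : Fin n → ℝ) (hτ : ∀ i, 0 ≤ τ i)
    (hquant : ∀ i, 1 - ε ≤ (μ {ω | X i ω ≤ τ i}).toReal ∧
      (μ {ω | X i ω ≤ τ i}).toReal ≤ 1 - ε + Δ)
    (H : Fin n → ℝ)
    (hH : ∀ i, H i = (∫ ω in {ω | τ i < X i ω}, f (Pi.single i (X i ω)) ∂μ) /
      (μ {ω | τ i < X i ω}).toReal)
    (hH_int : ∀ i, Integrable (fun ω => f (Pi.single i (X i ω))) μ)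
    (cst : Fin n → ℝ) (hcst : ∀ i, τ i < cst i)
    (hcstH : ∀ i, f (Pi.single i (cst i)) = H i)
    (Xhat : Fin n → Ωs → ℝ)
    (hXhat : ∀ i ω, Xhat i ω = if X i ω ≤ τ i then X i ω else cst i)
    (Xtil : Fin n → Ωs → ℝ)
    (hXtil : ∀ i ω, Xtil i ω = if a * τ i < Xhat i ω then Xhat i ω else 0)
    (Y : Fin n → Ωs → ℝ)
    (hY : ∀ i ω, (1 - ε) * Xtil i ω ≤ Y i ω ∧ Y i ω ≤ Xtil i ω)
    (u v : Finset (Fin n) → ℝ)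
    (hu : ∀ S, u S = ∫ ω, f (mask S (fun i => X i ω)) ∂μ)
    (hv : ∀ S, v S = ∫ ω, f (mask S (fun i => Y i ω)) ∂μ)
    (hu_int : ∀ S : Finset (Fin n),
      Integrable (fun ω => f (mask S (fun i => X i ω))) μ)
    (hv_int : ∀ S : Finset (Fin n),
      Integrable (fun ω => f (mask S (fun i => Y i ω))) μ) :
    ∀ S : Finset (Fin n), S.card ≤ k →
      (1 / 2) * (Real.exp (-(c / (1 - c))) * (1 - Δ * k / c)) * v S ≤ u S ∧
      u S ≤ 2 * η * (1 + c) / (Real.exp (-(c / (1 - c))) * (1 - Δ * k / c)) * v S := by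
  classical
  intro S hSk
  -- ## numeric facts
  obtain ⟨hcΔk, hc1⟩ := hc
  obtain ⟨hΔε, hε1⟩ := hε
  have hε0 : 0 < ε := lt_of_le_of_lt hΔ hΔε
  have hkR : (1:ℝ) ≤ (k:ℝ) := by exact_mod_cast hk
  have hk0 : (0:ℝ) < k := by linarith
  have hc0 : 0 < c := lt_of_le_of_lt (by positivity) hcΔk
  have hkε : (k:ℝ) * ε = c := by rw [hεdef]; field_simp
  have hεc : ε ≤ c := by rw [hεdef]; exact div_le_self hc0.le hkR
  have h1ε : 0 < 1 - ε := by linarith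
  have hεΔ : 0 < ε - Δ := by linarith
  have hηpos : 0 < η := lt_of_lt_of_le one_pos hη
  have hd0 : 0 < d := hd.1
  have hδ1 : Δ * k / c < 1 := (div_lt_one hc0).mpr hcΔk
  have hδ0 : 0 ≤ Δ * k / c := by positivity
  set ψ : ℝ := Real.exp (-(c / (1 - c))) * (1 - Δ * k / c) with hψdef
  have hψ0 : 0 < ψ := mul_pos (Real.exp_pos _) (by linarith)
  have hxx : 0 < ε * (ε - Δ) := mul_pos hε0 hεΔ
  have hxx1 : ε * (ε - Δ) ≤ 1 := by nlinarith
  have ha0 : 0 ≤ a := hadef ▸ Real.rpow_nonneg hxx.le _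
  have ha1 : a ≤ 1 := hadef ▸ Real.rpow_le_one hxx.le hxx1 (by positivity)
  have had : a ^ d = ε * (ε - Δ) := by
    rw [hadef, ← Real.rpow_mul hxx.le, one_div_mul_cancel (ne_of_gt hd0), Real.rpow_one]
  -- ## basic f facts
  have hf0 : f 0 = 0 := by
    have h := (hf_hom 0 0 le_rfl ⟨le_rfl, zero_le_one⟩).2
    rw [zero_smul, Real.zero_rpow (ne_of_gt hd0), zero_mul] at h
    exact le_antisymm h (hf_nonneg 0 le_rfl)
  -- ## measure-theoretic basics
  have hAmeas : ∀ i, MeasurableSet {ω | X i ω ≤ τ i} :=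
    fun i => measurableSet_le (hX_meas i) measurable_const
  have hCmeas : ∀ i, MeasurableSet {ω | τ i < X i ω} :=
    fun i => measurableSet_lt measurable_const (hX_meas i)
  set p : Fin n → ℝ := fun i => (μ {ω | X i ω ≤ τ i}).toReal with hpdef
  set q : Fin n → ℝ := fun i => (μ {ω | τ i < X i ω}).toReal with hqdef
  have hpq : ∀ i, p i + q i = 1 := by
    intro i
    have hcompl : {ω | τ i < X i ω} = {ω | X i ω ≤ τ i}ᶜ := by
      ext ω; simp [not_le]
    have h := measure_add_measure_compl (μ := μ) (hAmeas i)
    rw [measure_univ] at h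
    show (μ {ω | X i ω ≤ τ i}).toReal + (μ {ω | τ i < X i ω}).toReal = 1
    rw [hcompl, ← ENNReal.toReal_add (measure_ne_top μ _) (measure_ne_top μ _), h,
      ENNReal.toReal_one]
  have hp_lb : ∀ i, 1 - ε ≤ p i := fun i => (hquant i).1
  have hq_ub : ∀ i, q i ≤ ε := fun i => by
    have h1 := (hquant i).1; have h2 := hpq i; linarith
  have hq_lb : ∀ i, ε - Δ ≤ q i := fun i => by
    have h1 := (hquant i).2; have h2 := hpq i; linarith
  have hq_pos : ∀ i, 0 < q i := fun i => lt_of_lt_of_le hεΔ (hq_lb i)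
  set Ti : Fin n → ℝ := fun i => ∫ ω in {ω | τ i < X i ω}, f (Pi.single i (X i ω)) ∂μ
    with hTidef
  set T : ℝ := ∑ i ∈ S, Ti i with hTdef
  have hTi0 : ∀ i, 0 ≤ Ti i := fun i => setIntegral_nonneg (hCmeas i)
    (fun ω _ => hf_nonneg _ (single_nonneg' i (hX_nonneg i ω)))
  have hT0 : 0 ≤ T := Finset.sum_nonneg fun i _ => hTi0 i
  have hHiq : ∀ i, H i = Ti i / q i := fun i => hH i
  have hHq : ∀ i, H i * q i = Ti i := fun i => by
    rw [hHiq i, div_mul_cancel₀ _ (ne_of_gt (hq_pos i))]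
  have hH0 : ∀ i, 0 ≤ H i := fun i => by
    rw [hHiq i]; exact div_nonneg (hTi0 i) (hq_pos i).le
  have hfsingle_le_H : ∀ i, f (Pi.single i (τ i)) ≤ H i := by
    intro i
    have hint : (μ {ω | τ i < X i ω}).toReal • f (Pi.single i (τ i)) ≤ Ti i := by
      rw [← measureReal_def, ← setIntegral_const]
      apply setIntegral_mono_on (integrableOn_const (measure_lt_top μ _).ne)
        ((hH_int i).integrableOn) (hCmeas i)
      intro ω hω
      refine hf_mono _ _ (single_nonneg' i (hτ i)) (fun j => ?_)
      rw [Pi.single_apply, Pi.single_apply]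
      split
      · exact le_of_lt hω
      · exact le_rfl
    rw [hHiq i, le_div_iff₀ (hq_pos i)]
    calc f (Pi.single i (τ i)) * q i = q i • f (Pi.single i (τ i)) := by
          rw [smul_eq_mul]; ring
      _ ≤ Ti i := hint
  have hH_le : ∀ i, H i ≤ Ti i / (ε - Δ) := fun i => by
    rw [hHiq i]
    exact div_le_div_of_nonneg_left (hTi0 i) hεΔ (hq_lb i)
  -- ## measurability and pointwise facts
  have hsingleX_meas : ∀ i, Measurable (fun ω => Pi.single (M := fun _ : Fin n => ℝ) i (X i ω)) := by
    intro i
    apply measurable_pi_lambda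
    intro j
    by_cases hji : j = i
    · subst hji; simpa [Pi.single_apply] using hX_meas j
    · simp only [Pi.single_apply, if_neg hji]; exact measurable_const
  have hXsm_meas : ∀ i, Measurable (fun ω => if X i ω ≤ τ i then X i ω else 0) := fun i =>
    Measurable.ite (hAmeas i) (hX_meas i) measurable_const
  have hXhat_meas : ∀ i, Measurable (Xhat i) := by
    intro i
    have he : Xhat i = fun ω => if X i ω ≤ τ i then X i ω else cst i := funext (hXhat i)
    rw [he]
    exact Measurable.ite (hAmeas i) (hX_meas i) measurable_const
  have hXtil_meas : ∀ i, Measurable (Xtil i) := by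
    intro i
    have he : Xtil i = fun ω => if a * τ i < Xhat i ω then Xhat i ω else 0 := funext (hXtil i)
    rw [he]
    exact Measurable.ite (measurableSet_lt measurable_const (hXhat_meas i)) (hXhat_meas i)
      measurable_const
  have hmaskmeas : ∀ (Z : Fin n → Ωs → ℝ), (∀ i, Measurable (Z i)) →
      Measurable (fun ω => f (mask S fun i => Z i ω)) := by
    intro Z hZ
    apply hf_meas.comp
    apply measurable_pi_lambda
    intro i
    by_cases hi : i ∈ S
    · simpa [mask, hi] using hZ i
    · simp only [mask, if_neg hi]; exact measurable_const
  have hcst0 : ∀ i, 0 ≤ cst i := fun i => le_of_lt (lt_of_le_of_lt (hτ i) (hcst i))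
  have hXhat0 : ∀ i ω, 0 ≤ Xhat i ω := fun i ω => by
    rw [hXhat i ω]; split
    · exact hX_nonneg i ω
    · exact hcst0 i
  have hXtil0 : ∀ i ω, 0 ≤ Xtil i ω := fun i ω => by
    rw [hXtil i ω]; split
    · exact hXhat0 i ω
    · exact le_rfl
  have hXtil_le_Xhat : ∀ i ω, Xtil i ω ≤ Xhat i ω := fun i ω => by
    rw [hXtil i ω]; split
    · exact le_rfl
    · exact hXhat0 i ω
  have hY0 : ∀ i ω, 0 ≤ Y i ω := fun i ω =>
    le_trans (mul_nonneg h1ε.le (hXtil0 i ω)) (hY i ω).1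
  have hXtil_eq_cst : ∀ i ω, τ i < X i ω → Xtil i ω = cst i := by
    intro i ω h
    have hhat : Xhat i ω = cst i := by rw [hXhat i ω, if_neg (not_le.mpr h)]
    rw [hXtil i ω, hhat, if_pos (lt_of_le_of_lt (mul_le_of_le_one_left (hτ i) ha1) (hcst i))]
  -- nonnegativity of the main integrands
  have hFX0 : ∀ ω, 0 ≤ f (mask S fun i => X i ω) := fun ω =>
    hf_nonneg _ (mask_nonneg _ fun i => hX_nonneg i ω)
  have hFsm0 : ∀ ω, 0 ≤ f (mask S fun i => if X i ω ≤ τ i then X i ω else 0) := fun ω =>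
    hf_nonneg _ (mask_nonneg _ fun i => by split; exacts [hX_nonneg i ω, le_rfl])
  have hFhat0 : ∀ ω, 0 ≤ f (mask S fun i => Xhat i ω) := fun ω =>
    hf_nonneg _ (mask_nonneg _ fun i => hXhat0 i ω)
  have hFtil0 : ∀ ω, 0 ≤ f (mask S fun i => Xtil i ω) := fun ω =>
    hf_nonneg _ (mask_nonneg _ fun i => hXtil0 i ω)
  -- integrability of the main integrands
  have hFsm_le : ∀ ω, f (mask S fun i => if X i ω ≤ τ i then X i ω else 0)
      ≤ f (mask S fun i => X i ω) := fun ω =>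
    hf_mono _ _ (mask_nonneg _ fun i => by split; exacts [hX_nonneg i ω, le_rfl])
      (mask_mono _ fun i => by split; exacts [le_rfl, hX_nonneg i ω])
  have hFsm_int : Integrable (fun ω => f (mask S fun i => if X i ω ≤ τ i then X i ω else 0)) μ := by
    refine (hu_int S).mono' (hmaskmeas _ hXsm_meas).aestronglyMeasurable
      (ae_of_all _ fun ω => ?_)
    rw [Real.norm_eq_abs, abs_of_nonneg (hFsm0 ω)]
    exact hFsm_le ω
  have hCH0 : 0 ≤ ∑ i ∈ S, H i := Finset.sum_nonneg fun i _ => hH0 i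
  -- ## pointwise decomposition claims
  have claim1 : ∀ ω, f (mask S fun i => X i ω)
      ≤ f (mask S fun i => if X i ω ≤ τ i then X i ω else 0)
        + ∑ i ∈ S, f (Pi.single i (X i ω)) * (if τ i < X i ω then (1:ℝ) else 0) := by
    intro ω
    have hdec : (mask S fun i => X i ω)
        = (mask S fun i => if X i ω ≤ τ i then X i ω else 0)
          + mask (S.filter fun i => τ i < X i ω) (fun i => X i ω) := by
      funext j
      rw [Pi.add_apply, mask_apply, mask_apply, mask_apply]
      by_cases hj : j ∈ S
      · have hmem : (j ∈ S.filter fun i => τ i < X i ω) ↔ τ j < X j ω := by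
          simp [Finset.mem_filter, hj]
        rw [if_pos hj, if_pos hj]
        by_cases hτj : X j ω ≤ τ j
        · rw [if_pos hτj, if_neg (fun h => absurd (hmem.mp h) (not_lt.mpr hτj)), add_zero]
        · rw [if_neg hτj, if_pos (hmem.mpr (not_le.mp hτj)), zero_add]
      · have hmem : j ∉ S.filter fun i => τ i < X i ω := fun h => hj (Finset.mem_filter.mp h).1
        rw [if_neg hj, if_neg hj, if_neg hmem, add_zero]
    calc f (mask S fun i => X i ω)
        ≤ f (mask S fun i => if X i ω ≤ τ i then X i ω else 0)
          + f (mask (S.filter fun i => τ i < X i ω) (fun i => X i ω)) := by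
          rw [hdec]
          exact hf_subadd _ _
            (mask_nonneg _ fun i => by split; exacts [hX_nonneg i ω, le_rfl])
            (mask_nonneg _ fun i => hX_nonneg i ω)
      _ ≤ f (mask S fun i => if X i ω ≤ τ i then X i ω else 0)
          + ∑ i ∈ S.filter (fun i => τ i < X i ω), f (Pi.single i (X i ω)) := by
          have h := f_mask_le_sum f hf0 hf_subadd (fun i => X i ω) (fun i => hX_nonneg i ω)
            (S.filter fun i => τ i < X i ω)
          linarith
      _ = f (mask S fun i => if X i ω ≤ τ i then X i ω else 0)
          + ∑ i ∈ S, f (Pi.single i (X i ω)) * (if τ i < X i ω then (1:ℝ) else 0) := by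
          rw [Finset.sum_filter]
          congr 1
          refine Finset.sum_congr rfl fun i _ => ?_
          split
          · rw [mul_one]
          · rw [mul_zero]
  have claim2 : ∀ ω, f (mask S fun i => Xhat i ω)
      ≤ f (mask S fun i => if X i ω ≤ τ i then X i ω else 0)
        + ∑ i ∈ S, H i * (if τ i < X i ω then (1:ℝ) else 0) := by
    intro ω
    have hdec : (mask S fun i => Xhat i ω)
        = (mask S fun i => if X i ω ≤ τ i then X i ω else 0)
          + mask (S.filter fun i => τ i < X i ω) cst := by
      funext j
      rw [Pi.add_apply, mask_apply, mask_apply, mask_apply]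
      by_cases hj : j ∈ S
      · have hmem : (j ∈ S.filter fun i => τ i < X i ω) ↔ τ j < X j ω := by
          simp [Finset.mem_filter, hj]
        rw [if_pos hj, if_pos hj, hXhat j ω]
        by_cases hτj : X j ω ≤ τ j
        · rw [if_pos hτj, if_pos hτj, if_neg (fun h => absurd (hmem.mp h) (not_lt.mpr hτj)),
            add_zero]
        · rw [if_neg hτj, if_neg hτj, if_pos (hmem.mpr (not_le.mp hτj)), zero_add]
      · have hmem : j ∉ S.filter fun i => τ i < X i ω := fun h => hj (Finset.mem_filter.mp h).1
        rw [if_neg hj, if_neg hj, if_neg hmem, add_zero]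
    calc f (mask S fun i => Xhat i ω)
        ≤ f (mask S fun i => if X i ω ≤ τ i then X i ω else 0)
          + f (mask (S.filter fun i => τ i < X i ω) cst) := by
          rw [hdec]
          exact hf_subadd _ _
            (mask_nonneg _ fun i => by split; exacts [hX_nonneg i ω, le_rfl])
            (mask_nonneg _ hcst0)
      _ ≤ f (mask S fun i => if X i ω ≤ τ i then X i ω else 0)
          + ∑ i ∈ S.filter (fun i => τ i < X i ω), f (Pi.single i (cst i)) := by
          have h := f_mask_le_sum f hf0 hf_subadd cst hcst0 (S.filter fun i => τ i < X i ω)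
          linarith
      _ = f (mask S fun i => if X i ω ≤ τ i then X i ω else 0)
          + ∑ i ∈ S, H i * (if τ i < X i ω then (1:ℝ) else 0) := by
          rw [Finset.sum_filter]
          congr 1
          refine Finset.sum_congr rfl fun i _ => ?_
          rw [hcstH i]
          split
          · rw [mul_one]
          · rw [mul_zero]
  have claim3 : ∀ ω, f (mask S fun i => Xhat i ω)
      ≤ f (mask S fun i => Xtil i ω) + a ^ d * f (mask S τ) := by
    intro ω
    have hle : (mask S fun i => Xhat i ω)
        ≤ (mask S fun i => Xtil i ω) + mask S (fun i => a * τ i) := by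
      intro j
      rw [Pi.add_apply, mask_apply, mask_apply, mask_apply]
      by_cases hj : j ∈ S
      · rw [if_pos hj, if_pos hj, if_pos hj]
        by_cases hb : a * τ j < Xhat j ω
        · rw [hXtil j ω, if_pos hb]
          have : 0 ≤ a * τ j := mul_nonneg ha0 (hτ j)
          linarith
        · rw [hXtil j ω, if_neg hb, zero_add]
          exact not_lt.mp hb
      · rw [if_neg hj, if_neg hj, if_neg hj, add_zero]
    have hsmul : mask S (fun i => a * τ i) = a • mask S τ := by
      funext j
      rw [Pi.smul_apply, mask_apply, mask_apply, smul_eq_mul]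
      split
      · rfl
      · rw [mul_zero]
    calc f (mask S fun i => Xhat i ω)
        ≤ f ((mask S fun i => Xtil i ω) + mask S (fun i => a * τ i)) :=
          hf_mono _ _ (mask_nonneg _ fun i => hXhat0 i ω) hle
      _ ≤ f (mask S fun i => Xtil i ω) + f (mask S (fun i => a * τ i)) :=
          hf_subadd _ _ (mask_nonneg _ fun i => hXtil0 i ω)
            (mask_nonneg _ fun i => mul_nonneg ha0 (hτ i))
      _ ≤ f (mask S fun i => Xtil i ω) + a ^ d * f (mask S τ) := by
          have h2 := (hf_hom (mask S τ) a (mask_nonneg _ hτ) ⟨ha0, ha1⟩).2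
          rw [hsmul]
          linarith
  have hK : a ^ d * f (mask S τ) ≤ ε * T := by
    have h1 : f (mask S τ) ≤ ∑ i ∈ S, f (Pi.single i (τ i)) :=
      f_mask_le_sum f hf0 hf_subadd τ hτ S
    have h2 : ∑ i ∈ S, f (Pi.single i (τ i)) ≤ ∑ i ∈ S, Ti i / (ε - Δ) :=
      Finset.sum_le_sum fun i _ => le_trans (hfsingle_le_H i) (hH_le i)
    have h3 : ∑ i ∈ S, Ti i / (ε - Δ) = T / (ε - Δ) := by
      rw [hTdef, Finset.sum_div]
    have hfm0 : 0 ≤ f (mask S τ) := hf_nonneg _ (mask_nonneg _ hτ)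
    rw [had]
    calc ε * (ε - Δ) * f (mask S τ) ≤ ε * (ε - Δ) * (T / (ε - Δ)) := by
          apply mul_le_mul_of_nonneg_left _ (by positivity)
          linarith
      _ = ε * T := by field_simp
  -- ## integral identities for the tail weights
  have hWa_meas : ∀ i, Measurable
      (fun ω => f (Pi.single i (X i ω)) * (if τ i < X i ω then (1:ℝ) else 0)) := fun i =>
    (hf_meas.comp (hsingleX_meas i)).mul
      (Measurable.ite (hCmeas i) measurable_const measurable_const)
  have hWa0 : ∀ i ω, 0 ≤ f (Pi.single i (X i ω)) * (if τ i < X i ω then (1:ℝ) else 0) :=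
    fun i ω => mul_nonneg (hf_nonneg _ (single_nonneg' i (hX_nonneg i ω)))
      (by split <;> norm_num)
  have hWa_le : ∀ i ω, f (Pi.single i (X i ω)) * (if τ i < X i ω then (1:ℝ) else 0)
      ≤ f (Pi.single i (X i ω)) := fun i ω =>
    mul_le_of_le_one_right (hf_nonneg _ (single_nonneg' i (hX_nonneg i ω)))
      (by split <;> norm_num)
  have hWa_int : ∀ i, Integrable
      (fun ω => f (Pi.single i (X i ω)) * (if τ i < X i ω then (1:ℝ) else 0)) μ := by
    intro i
    refine (hH_int i).mono' (hWa_meas i).aestronglyMeasurable (ae_of_all _ fun ω => ?_)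
    rw [Real.norm_eq_abs, abs_of_nonneg (hWa0 i ω)]
    exact hWa_le i ω
  have hWa_eq : ∀ i, ∫ ω, f (Pi.single i (X i ω)) * (if τ i < X i ω then (1:ℝ) else 0) ∂μ
      = Ti i := by
    intro i
    have he : (fun ω => f (Pi.single i (X i ω)) * (if τ i < X i ω then (1:ℝ) else 0))
        = {ω | τ i < X i ω}.indicator (fun ω => f (Pi.single i (X i ω))) := by
      funext ω
      simp only [Set.indicator_apply, Set.mem_setOf_eq]
      by_cases h : τ i < X i ω
      · rw [if_pos h, if_pos h, mul_one]
      · rw [if_neg h, if_neg h, mul_zero]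
    rw [he, integral_indicator (hCmeas i)]
  have hWb_meas : ∀ i, Measurable (fun ω => H i * (if τ i < X i ω then (1:ℝ) else 0)) :=
    fun i => measurable_const.mul
      (Measurable.ite (hCmeas i) measurable_const measurable_const)
  have hWb0 : ∀ i ω, 0 ≤ H i * (if τ i < X i ω then (1:ℝ) else 0) :=
    fun i ω => mul_nonneg (hH0 i) (by split <;> norm_num)
  have hWb_le : ∀ i ω, H i * (if τ i < X i ω then (1:ℝ) else 0) ≤ H i := fun i ω =>
    mul_le_of_le_one_right (hH0 i) (by split <;> norm_num)
  have hWb_int : ∀ i, Integrable (fun ω => H i * (if τ i < X i ω then (1:ℝ) else 0)) μ := by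
    intro i
    refine (integrable_const (H i)).mono' (hWb_meas i).aestronglyMeasurable
      (ae_of_all _ fun ω => ?_)
    rw [Real.norm_eq_abs, abs_of_nonneg (hWb0 i ω)]
    exact hWb_le i ω
  have hWb_eq : ∀ i, ∫ ω, H i * (if τ i < X i ω then (1:ℝ) else 0) ∂μ = Ti i := by
    intro i
    have he : (fun ω => H i * (if τ i < X i ω then (1:ℝ) else 0))
        = {ω | τ i < X i ω}.indicator (fun _ => H i) := by
      funext ω
      simp only [Set.indicator_apply, Set.mem_setOf_eq]
      by_cases h : τ i < X i ω
      · rw [if_pos h, if_pos h, mul_one]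
      · rw [if_neg h, if_neg h, mul_zero]
    rw [he, integral_indicator_const _ (hCmeas i), smul_eq_mul, mul_comm]
    exact hHq i
  -- ## integrability of the remaining integrands
  have hFhat_ptle : ∀ ω, f (mask S fun i => Xhat i ω)
      ≤ f (mask S fun i => X i ω) + ∑ i ∈ S, H i := by
    intro ω
    have h1 := claim2 ω
    have h2 : ∑ i ∈ S, H i * (if τ i < X i ω then (1:ℝ) else 0) ≤ ∑ i ∈ S, H i :=
      Finset.sum_le_sum fun i _ => hWb_le i ω
    have h3 := hFsm_le ω
    linarith
  have hFhat_int : Integrable (fun ω => f (mask S fun i => Xhat i ω)) μ := by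
    refine ((hu_int S).add (integrable_const (∑ i ∈ S, H i))).mono'
      (hmaskmeas _ hXhat_meas).aestronglyMeasurable (ae_of_all _ fun ω => ?_)
    rw [Real.norm_eq_abs, abs_of_nonneg (hFhat0 ω)]
    exact hFhat_ptle ω
  have hFtil_ptle : ∀ ω, f (mask S fun i => Xtil i ω) ≤ f (mask S fun i => Xhat i ω) :=
    fun ω => hf_mono _ _ (mask_nonneg _ fun i => hXtil0 i ω)
      (mask_mono _ fun i => hXtil_le_Xhat i ω)
  have hFtil_int : Integrable (fun ω => f (mask S fun i => Xtil i ω)) μ := by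
    refine hFhat_int.mono' (hmaskmeas _ hXtil_meas).aestronglyMeasurable
      (ae_of_all _ fun ω => ?_)
    rw [Real.norm_eq_abs, abs_of_nonneg (hFtil0 ω)]
    exact hFtil_ptle ω
  -- ## product facts
  have hG0 : ∀ (i : Fin n) ω, 0 ≤ ∏ j ∈ S.erase i, (if X j ω ≤ τ j then (1:ℝ) else 0) :=
    fun i ω => Finset.prod_nonneg fun j _ => by split <;> norm_num
  have hG1 : ∀ (i : Fin n) ω, (∏ j ∈ S.erase i, (if X j ω ≤ τ j then (1:ℝ) else 0)) ≤ 1 :=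
    fun i ω => Finset.prod_le_one (fun j _ => by split <;> norm_num)
      (fun j _ => by split <;> norm_num)
  have hGmeas : ∀ i : Fin n, Measurable
      (fun ω => ∏ j ∈ S.erase i, (if X j ω ≤ τ j then (1:ℝ) else 0)) := fun i =>
    Finset.measurable_prod _ fun j _ =>
      Measurable.ite (hAmeas j) measurable_const measurable_const
  -- ## pointwise lower-bound claims
  have claim4 : ∀ ω, ∑ i ∈ S, (f (Pi.single i (X i ω)) * (if τ i < X i ω then (1:ℝ) else 0))
      * (∏ j ∈ S.erase i, (if X j ω ≤ τ j then (1:ℝ) else 0))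
      ≤ f (mask S fun i => X i ω) := by
    intro ω
    apply sum_le_of_pairwise S _ _ (hFX0 ω)
    · intro i hi
      calc (f (Pi.single i (X i ω)) * (if τ i < X i ω then (1:ℝ) else 0))
          * (∏ j ∈ S.erase i, (if X j ω ≤ τ j then (1:ℝ) else 0))
          ≤ (f (Pi.single i (X i ω)) * (if τ i < X i ω then (1:ℝ) else 0)) * 1 :=
            mul_le_mul_of_nonneg_left (hG1 i ω) (hWa0 i ω)
        _ = f (Pi.single i (X i ω)) * (if τ i < X i ω then (1:ℝ) else 0) := mul_one _
        _ ≤ f (Pi.single i (X i ω)) := hWa_le i ω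
        _ ≤ f (mask S fun i => X i ω) :=
            hf_mono _ _ (single_nonneg' i (hX_nonneg i ω))
              (single_le_mask hi fun j => hX_nonneg j ω)
    · intro i hi j hj hij
      by_cases hci : τ i < X i ω
      · right
        have h0 : (∏ l ∈ S.erase j, (if X l ω ≤ τ l then (1:ℝ) else 0)) = 0 :=
          Finset.prod_eq_zero (Finset.mem_erase.mpr ⟨hij, hi⟩)
            (by rw [if_neg (not_le.mpr hci)])
        rw [h0, mul_zero]
      · left
        rw [if_neg hci, mul_zero, zero_mul]
  have claim5 : ∀ ω, ∑ i ∈ S, (H i * (if τ i < X i ω then (1:ℝ) else 0))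
      * (∏ j ∈ S.erase i, (if X j ω ≤ τ j then (1:ℝ) else 0))
      ≤ f (mask S fun i => Xtil i ω) := by
    intro ω
    apply sum_le_of_pairwise S _ _ (hFtil0 ω)
    · intro i hi
      by_cases hci : τ i < X i ω
      · have hsingle : Pi.single i (cst i) ≤ mask S fun l => Xtil l ω := by
          intro jj
          rw [Pi.single_apply, mask_apply]
          by_cases hjj : jj = i
          · subst hjj
            rw [if_pos rfl, if_pos hi]
            exact le_of_eq (hXtil_eq_cst jj ω hci).symm
          · rw [if_neg hjj]
            split
            · exact hXtil0 _ _
            · exact le_rfl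
        calc (H i * (if τ i < X i ω then (1:ℝ) else 0))
            * (∏ j ∈ S.erase i, (if X j ω ≤ τ j then (1:ℝ) else 0))
            ≤ (H i * (if τ i < X i ω then (1:ℝ) else 0)) * 1 :=
              mul_le_mul_of_nonneg_left (hG1 i ω) (hWb0 i ω)
          _ = H i * (if τ i < X i ω then (1:ℝ) else 0) := mul_one _
          _ ≤ H i := hWb_le i ω
          _ = f (Pi.single i (cst i)) := (hcstH i).symm
          _ ≤ f (mask S fun l => Xtil l ω) :=
              hf_mono _ _ (single_nonneg' i (hcst0 i)) hsingle
      · rw [if_neg hci, mul_zero, zero_mul]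
        exact hFtil0 ω
    · intro i hi j hj hij
      by_cases hci : τ i < X i ω
      · right
        have h0 : (∏ l ∈ S.erase j, (if X l ω ≤ τ l then (1:ℝ) else 0)) = 0 :=
          Finset.prod_eq_zero (Finset.mem_erase.mpr ⟨hij, hi⟩)
            (by rw [if_neg (not_le.mpr hci)])
        rw [h0, mul_zero]
      · left
        rw [if_neg hci, mul_zero, zero_mul]
  -- ## independence key equalities
  have hta_int : ∀ i : Fin n, Integrable (fun ω =>
      (f (Pi.single i (X i ω)) * (if τ i < X i ω then (1:ℝ) else 0))
      * (∏ j ∈ S.erase i, (if X j ω ≤ τ j then (1:ℝ) else 0))) μ := by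
    intro i
    refine (hH_int i).mono' ((hWa_meas i).mul (hGmeas i)).aestronglyMeasurable
      (ae_of_all _ fun ω => ?_)
    rw [Real.norm_eq_abs, abs_of_nonneg (mul_nonneg (hWa0 i ω) (hG0 i ω))]
    calc (f (Pi.single i (X i ω)) * (if τ i < X i ω then (1:ℝ) else 0))
        * (∏ j ∈ S.erase i, (if X j ω ≤ τ j then (1:ℝ) else 0))
        ≤ (f (Pi.single i (X i ω)) * (if τ i < X i ω then (1:ℝ) else 0)) * 1 :=
          mul_le_mul_of_nonneg_left (hG1 i ω) (hWa0 i ω)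
      _ = f (Pi.single i (X i ω)) * (if τ i < X i ω then (1:ℝ) else 0) := mul_one _
      _ ≤ f (Pi.single i (X i ω)) := hWa_le i ω
  have htb_int : ∀ i : Fin n, Integrable (fun ω =>
      (H i * (if τ i < X i ω then (1:ℝ) else 0))
      * (∏ j ∈ S.erase i, (if X j ω ≤ τ j then (1:ℝ) else 0))) μ := by
    intro i
    refine (integrable_const (H i)).mono'
      ((hWb_meas i).mul (hGmeas i)).aestronglyMeasurable (ae_of_all _ fun ω => ?_)
    rw [Real.norm_eq_abs, abs_of_nonneg (mul_nonneg (hWb0 i ω) (hG0 i ω))]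
    calc (H i * (if τ i < X i ω then (1:ℝ) else 0))
        * (∏ j ∈ S.erase i, (if X j ω ≤ τ j then (1:ℝ) else 0))
        ≤ (H i * (if τ i < X i ω then (1:ℝ) else 0)) * 1 :=
          mul_le_mul_of_nonneg_left (hG1 i ω) (hWb0 i ω)
      _ = H i * (if τ i < X i ω then (1:ℝ) else 0) := mul_one _
      _ ≤ H i := hWb_le i ω
  have key_a : ∀ i ∈ S, ∫ ω, (f (Pi.single i (X i ω)) * (if τ i < X i ω then (1:ℝ) else 0))
      * (∏ j ∈ S.erase i, (if X j ω ≤ τ j then (1:ℝ) else 0)) ∂μ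
      = Ti i * ∏ j ∈ S.erase i, p j := by
    intro i _
    have hwmeas : Measurable (fun x : ℝ => f (Pi.single i x) * (if τ i < x then (1:ℝ) else 0)) := by
      refine Measurable.mul (hf_meas.comp ?_)
        (Measurable.ite (measurableSet_lt measurable_const measurable_id)
          measurable_const measurable_const)
      apply measurable_pi_lambda
      intro j
      by_cases hji : j = i
      · subst hji; simpa [Pi.single_apply] using measurable_id'
      · simp only [Pi.single_apply, if_neg hji]; exact measurable_const
    have h := indep_tail μ X hX_meas hX_indep τ i (S.erase i) (Finset.notMem_erase i S)
      (fun x => f (Pi.single i x) * (if τ i < x then (1:ℝ) else 0)) hwmeas (hWa_int i)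
    rw [← hWa_eq i]
    exact h
  have key_b : ∀ i ∈ S, ∫ ω, (H i * (if τ i < X i ω then (1:ℝ) else 0))
      * (∏ j ∈ S.erase i, (if X j ω ≤ τ j then (1:ℝ) else 0)) ∂μ
      = Ti i * ∏ j ∈ S.erase i, p j := by
    intro i _
    have hwmeas : Measurable (fun x : ℝ => H i * (if τ i < x then (1:ℝ) else 0)) :=
      measurable_const.mul (Measurable.ite (measurableSet_lt measurable_const measurable_id)
        measurable_const measurable_const)
    have h := indep_tail μ X hX_meas hX_indep τ i (S.erase i) (Finset.notMem_erase i S)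
      (fun x => H i * (if τ i < x then (1:ℝ) else 0)) hwmeas (hWb_int i)
    rw [← hWb_eq i]
    exact h
  have hprod_ge : ∀ i ∈ S, (1 - ε) ^ (k - 1) ≤ ∏ j ∈ S.erase i, p j := by
    intro i hi
    calc (1 - ε) ^ (k - 1) ≤ (1 - ε) ^ ((S.erase i).card) := by
          apply pow_le_pow_of_le_one h1ε.le (by linarith)
          rw [Finset.card_erase_of_mem hi]
          exact Nat.sub_le_sub_right hSk 1
      _ = ∏ j ∈ S.erase i, (1 - ε) := (Finset.prod_const _).symm
      _ ≤ ∏ j ∈ S.erase i, p j :=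
          Finset.prod_le_prod (fun _ _ => h1ε.le) (fun j _ => hp_lb j)
  have hsum_ge : ∀ (F : Fin n → Ωs → ℝ), (∀ i ∈ S, ∫ ω, F i ω ∂μ = Ti i * ∏ j ∈ S.erase i, p j)
      → (1 - ε) ^ (k - 1) * T ≤ ∑ i ∈ S, ∫ ω, F i ω ∂μ := by
    intro F hF
    rw [hTdef, Finset.mul_sum]
    apply Finset.sum_le_sum
    intro i hi
    rw [hF i hi]
    calc (1 - ε) ^ (k - 1) * Ti i = Ti i * (1 - ε) ^ (k - 1) := mul_comm _ _
      _ ≤ Ti i * ∏ j ∈ S.erase i, p j :=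
          mul_le_mul_of_nonneg_left (hprod_ge i hi) (hTi0 i)
  -- ## main integral inequalities
  set A : ℝ := ∫ ω, f (mask S fun i => if X i ω ≤ τ i then X i ω else 0) ∂μ with hAdef
  set Et : ℝ := ∫ ω, f (mask S fun i => Xtil i ω) ∂μ with hEdef
  have hA0 : 0 ≤ A := integral_nonneg fun ω => hFsm0 ω
  have hEt0 : 0 ≤ Et := integral_nonneg fun ω => hFtil0 ω
  have hu0 : 0 ≤ u S := by
    rw [hu S]; exact integral_nonneg fun ω => hFX0 ω
  have hA_le_u : A ≤ u S := by
    rw [hu S]; exact integral_mono hFsm_int (hu_int S) hFsm_le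
  have hu_le : u S ≤ A + T := by
    rw [hu S]
    calc ∫ ω, f (mask S fun i => X i ω) ∂μ
        ≤ ∫ ω, (f (mask S fun i => if X i ω ≤ τ i then X i ω else 0)
            + ∑ i ∈ S, f (Pi.single i (X i ω)) * (if τ i < X i ω then (1:ℝ) else 0)) ∂μ :=
          integral_mono (hu_int S)
            (hFsm_int.add (integrable_finset_sum _ fun i _ => hWa_int i)) claim1
      _ = A + ∑ i ∈ S, Ti i := by
          rw [integral_add hFsm_int (integrable_finset_sum _ fun i _ => hWa_int i),
            integral_finset_sum _ fun i _ => hWa_int i]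
          congr 1
          exact Finset.sum_congr rfl fun i _ => hWa_eq i
      _ = A + T := by rw [hTdef]
  have hhat_le : ∫ ω, f (mask S fun i => Xhat i ω) ∂μ ≤ A + T := by
    calc ∫ ω, f (mask S fun i => Xhat i ω) ∂μ
        ≤ ∫ ω, (f (mask S fun i => if X i ω ≤ τ i then X i ω else 0)
            + ∑ i ∈ S, H i * (if τ i < X i ω then (1:ℝ) else 0)) ∂μ :=
          integral_mono hFhat_int
            (hFsm_int.add (integrable_finset_sum _ fun i _ => hWb_int i)) claim2
      _ = A + ∑ i ∈ S, Ti i := by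
          rw [integral_add hFsm_int (integrable_finset_sum _ fun i _ => hWb_int i),
            integral_finset_sum _ fun i _ => hWb_int i]
          congr 1
          exact Finset.sum_congr rfl fun i _ => hWb_eq i
      _ = A + T := by rw [hTdef]
  have hv_le : v S ≤ A + T := by
    rw [hv S]
    calc ∫ ω, f (mask S fun i => Y i ω) ∂μ
        ≤ ∫ ω, f (mask S fun i => Xhat i ω) ∂μ :=
          integral_mono (hv_int S) hFhat_int (fun ω =>
            hf_mono _ _ (mask_nonneg _ fun i => hY0 i ω)
              (mask_mono _ fun i => le_trans (hY i ω).2 (hXtil_le_Xhat i ω)))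
      _ ≤ A + T := hhat_le
  have hA_le_hat : A ≤ ∫ ω, f (mask S fun i => Xhat i ω) ∂μ := by
    apply integral_mono hFsm_int hFhat_int
    intro ω
    apply hf_mono _ _ (mask_nonneg _ fun i => by split; exacts [hX_nonneg i ω, le_rfl])
    apply mask_mono
    intro i
    rw [hXhat i ω]
    split
    · exact le_rfl
    · exact hcst0 i
  have hhat_le_til : ∫ ω, f (mask S fun i => Xhat i ω) ∂μ ≤ Et + ε * T := by
    calc ∫ ω, f (mask S fun i => Xhat i ω) ∂μ
        ≤ ∫ ω, (f (mask S fun i => Xtil i ω) + a ^ d * f (mask S τ)) ∂μ :=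
          integral_mono hFhat_int (hFtil_int.add (integrable_const _)) claim3
      _ = Et + a ^ d * f (mask S τ) := by
          rw [integral_add hFtil_int (integrable_const _), integral_const]
          simp [measure_univ]; rfl
      _ ≤ Et + ε * T := by linarith [hK]
  have hE_ge_A : A - ε * T ≤ Et := by linarith
  have hu_ge_T : (1 - ε) ^ (k - 1) * T ≤ u S := by
    rw [hu S]
    have h2 : ∫ ω, ∑ i ∈ S, (f (Pi.single i (X i ω)) * (if τ i < X i ω then (1:ℝ) else 0))
        * (∏ j ∈ S.erase i, (if X j ω ≤ τ j then (1:ℝ) else 0)) ∂μ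
        ≤ ∫ ω, f (mask S fun i => X i ω) ∂μ :=
      integral_mono (integrable_finset_sum _ fun i _ => hta_int i) (hu_int S) claim4
    rw [integral_finset_sum _ (fun i _ => hta_int i)] at h2
    have h3 := hsum_ge _ key_a
    linarith
  have hE_ge_T : (1 - ε) ^ (k - 1) * T ≤ Et := by
    rw [hEdef]
    have h2 : ∫ ω, ∑ i ∈ S, (H i * (if τ i < X i ω then (1:ℝ) else 0))
        * (∏ j ∈ S.erase i, (if X j ω ≤ τ j then (1:ℝ) else 0)) ∂μ
        ≤ ∫ ω, f (mask S fun i => Xtil i ω) ∂μ :=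
      integral_mono (integrable_finset_sum _ fun i _ => htb_int i) hFtil_int claim5
    rw [integral_finset_sum _ (fun i _ => htb_int i)] at h2
    have h3 := hsum_ge _ key_b
    linarith
  have hv_ge : (1 / η) * (1 - ε) * Et ≤ v S := by
    rw [hv S]
    have hpt : ∀ ω, (1 / η) * (1 - ε) * f (mask S fun i => Xtil i ω)
        ≤ f (mask S fun i => Y i ω) := by
      intro ω
      have h1 := (hf_hom (mask S fun i => Xtil i ω) (1 - ε)
        (mask_nonneg _ fun i => hXtil0 i ω) ⟨h1ε.le, by linarith⟩).1
      have h2 : f ((1 - ε) • mask S fun i => Xtil i ω) ≤ f (mask S fun i => Y i ω) := by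
        apply hf_mono _ _ (smul_nonneg h1ε.le (mask_nonneg _ fun i => hXtil0 i ω))
        intro j
        rw [Pi.smul_apply, mask_apply, mask_apply, smul_eq_mul]
        split
        · exact (hY j ω).1
        · rw [mul_zero]
      linarith
    calc (1 / η) * (1 - ε) * Et
        = ∫ ω, (1 / η) * (1 - ε) * f (mask S fun i => Xtil i ω) ∂μ := by
          rw [hEdef, integral_const_mul]
      _ ≤ ∫ ω, f (mask S fun i => Y i ω) ∂μ :=
          integral_mono (hFtil_int.const_mul _) (hv_int S) hpt
  -- ## final numeric combination
  have hexp : Real.exp (-(c / (1 - c))) ≤ (1 - ε) ^ k := exp_le_pow hε0 hε1 hc1 hkε hεc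
  have hpowsucc : (1 - ε) ^ k = (1 - ε) ^ (k - 1) * (1 - ε) := by
    conv_lhs => rw [show k = (k - 1) + 1 from (Nat.succ_pred_eq_of_pos hk).symm]
    rw [pow_succ]
  have hβ1 : (1 - ε) ^ (k - 1) ≤ 1 := pow_le_one₀ h1ε.le (by linarith)
  have hβ0 : 0 < (1 - ε) ^ (k - 1) := pow_pos h1ε _
  have hψE : ψ ≤ Real.exp (-(c / (1 - c))) := by
    rw [hψdef]
    exact mul_le_of_le_one_right (Real.exp_pos _).le (by linarith)
  have hψβε : ψ ≤ (1 - ε) ^ (k - 1) * (1 - ε) := le_trans hψE (hpowsucc ▸ hexp)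
  have hψβ : ψ ≤ (1 - ε) ^ (k - 1) :=
    le_trans hψβε (mul_le_of_le_one_right hβ0.le (by linarith))
  constructor
  · -- lower bound
    have h1 : ψ * v S ≤ ψ * (A + T) := mul_le_mul_of_nonneg_left hv_le hψ0.le
    have h2 : ψ * (A + T) ≤ (1 - ε) ^ (k - 1) * (A + T) :=
      mul_le_mul_of_nonneg_right hψβ (by linarith)
    have h3 : (1 - ε) ^ (k - 1) * A ≤ A := mul_le_of_le_one_left hA0 hβ1
    have h4 : (1 - ε) ^ (k - 1) * (A + T) = (1 - ε) ^ (k - 1) * A + (1 - ε) ^ (k - 1) * T :=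
      mul_add _ _ _
    linarith
  · -- upper bound
    set lam : ℝ := ψ / (2 * (1 + c) * (1 - ε)) with hlam
    have hden : 0 < 2 * (1 + c) * (1 - ε) :=
      mul_pos (mul_pos (by norm_num) (by linarith)) h1ε
    have hlam0 : 0 < lam := div_pos hψ0 hden
    have hψ_le_1ε : ψ ≤ 1 - ε :=
      le_trans hψβε (mul_le_of_le_one_left h1ε.le hβ1)
    have hlam_le : lam ≤ 1 / 2 := by
      rw [hlam, div_le_iff₀ hden]
      have hcc : (1:ℝ) * (1 - ε) ≤ (1 + c) * (1 - ε) :=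
        mul_le_mul_of_nonneg_right (by linarith) h1ε.le
      have : (1 / 2 : ℝ) * (2 * (1 + c) * (1 - ε)) = (1 + c) * (1 - ε) := by ring
      linarith
    have hψlam : ψ = lam * (2 * (1 + c) * (1 - ε)) := by
      rw [hlam, div_mul_cancel₀ _ (ne_of_gt hden)]
    have hconv : lam * (A - ε * T) + (1 - lam) * ((1 - ε) ^ (k - 1) * T) ≤ Et := by
      have h1 := mul_le_mul_of_nonneg_left hE_ge_A hlam0.le
      have h2 := mul_le_mul_of_nonneg_left hE_ge_T (by linarith : (0:ℝ) ≤ 1 - lam)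
      have h3 : lam * Et + (1 - lam) * Et = Et := by ring
      linarith
    have hcoef : lam * (1 + ε) ≤ (1 - lam) * (1 - ε) ^ (k - 1) := by
      have h6 : ψ / (1 - ε) ≤ (1 - ε) ^ (k - 1) := (div_le_iff₀ h1ε).mpr hψβε
      have h7 : lam * (1 + ε) ≤ lam * (1 + c) :=
        mul_le_mul_of_nonneg_left (by linarith) hlam0.le
      have h8 : lam * (1 + c) = ψ / (2 * (1 - ε)) := by
        rw [hlam]
        field_simp
      have h9 : (1 / 2 : ℝ) * (1 - ε) ^ (k - 1) ≤ (1 - lam) * (1 - ε) ^ (k - 1) :=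
        mul_le_mul_of_nonneg_right (by linarith) hβ0.le
      have h10 : ψ / (2 * (1 - ε)) = (1 / 2 : ℝ) * (ψ / (1 - ε)) := by
        rw [mul_comm (2:ℝ) (1 - ε), ← div_div]
        ring
      calc lam * (1 + ε) ≤ lam * (1 + c) := h7
        _ = ψ / (2 * (1 - ε)) := h8
        _ ≤ (1 / 2 : ℝ) * (1 - ε) ^ (k - 1) := by rw [h10]; linarith
        _ ≤ (1 - lam) * (1 - ε) ^ (k - 1) := h9
    have hmain : lam * (A + T) ≤ Et := by
      have he : lam * (A + T) = lam * (A - ε * T) + lam * (1 + ε) * T := by ring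
      have h10 : lam * (1 + ε) * T ≤ (1 - lam) * ((1 - ε) ^ (k - 1) * T) := by
        rw [← mul_assoc]
        exact mul_le_mul_of_nonneg_right hcoef hT0
      linarith
    have h11 : (1 / η) * (1 - ε) * (lam * (A + T)) ≤ v S := by
      refine le_trans ?_ hv_ge
      apply mul_le_mul_of_nonneg_left hmain
      positivity
    have h12 : (1 / η) * (1 - ε) * (lam * u S) ≤ v S := by
      refine le_trans ?_ h11
      apply mul_le_mul_of_nonneg_left _ (by positivity : (0:ℝ) ≤ (1 / η) * (1 - ε))
      exact mul_le_mul_of_nonneg_left hu_le hlam0.le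
    rw [div_mul_eq_mul_div, le_div_iff₀ hψ0]
    calc u S * ψ = 2 * (1 + c) * η * ((1 / η) * (1 - ε) * (lam * u S)) := by
          rw [hψlam]
          field_simp
      _ ≤ 2 * (1 + c) * η * v S :=
          mul_le_mul_of_nonneg_left h12 (by positivity)
      _ = 2 * η * (1 + c) * v S := by ring
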